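/- For every integer n ≥ 2 and every x > 0, f_n(x) ≤ f_{n+1}(x), where f_n(x) = (Σ_{j=1}^{n-1} ((n-j)/(j!·n))·x^{j+1}) - x. -/

import Mathlib

noncomputable def f (n : ℕ) (x : ℝ) : ℝ :=
  (∑ j ∈ Finset.Icc 1 (n - 1), ((n : ℝ) - (j : ℝ)) / ((j.factorial : ℝ) * n) * x ^ (j + 1)) - x

theorem f_monotone_in_n (n : ℕ) (hn : 2 ≤ n) (x : ℝ) (hx : 0 < x) :
    f n x ≤ f (n + 1) x := by
  unfold f
  have hsub : n + 1 - 1 = n := by omega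
  rw [hsub]
  apply sub_le_sub_right
  have hsubset : Finset.Icc 1 (n - 1) ⊆ Finset.Icc 1 n := by
    apply Finset.Icc_subset_Icc_right; omega
  calc ∑ j ∈ Finset.Icc 1 (n - 1), ((n : ℝ) - (j : ℝ)) / ((j.factorial : ℝ) * n) * x ^ (j + 1)
      ≤ ∑ j ∈ Finset.Icc 1 (n - 1),
          ((n + 1 : ℝ) - (j : ℝ)) / ((j.factorial : ℝ) * (n + 1)) * x ^ (j + 1) := by
        apply Finset.sum_le_sum
        intro j hj
        simp only [Finset.mem_Icc] at hj
        have hjn : (j : ℝ) ≤ n := by exact_mod_cast le_trans hj.2 (Nat.sub_le n 1)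
        have hfac : (0 : ℝ) < (j.factorial : ℝ) := by positivity
        have hn0 : (0 : ℝ) < (n : ℝ) := by positivity
        apply mul_le_mul_of_nonneg_right _ (le_of_lt (pow_pos hx _))
        rw [div_le_div_iff₀ (by positivity) (by positivity)]
        ring_nf
        nlinarith [hfac, hn0, Nat.cast_nonneg (α := ℝ) j]
    _ ≤ ∑ j ∈ Finset.Icc 1 n,
          ((n + 1 : ℝ) - (j : ℝ)) / ((j.factorial : ℝ) * (n + 1)) * x ^ (j + 1) := by
        apply Finset.sum_le_sum_of_subset_of_nonneg hsubset
        intro j hj _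
        simp only [Finset.mem_Icc] at hj
        have : (j : ℝ) ≤ n := by exact_mod_cast hj.2
        have h1 : (j : ℝ) ≤ n + 1 := by linarith
        exact mul_nonneg (div_nonneg (by linarith) (by positivity)) (pow_pos hx _).le
    _ = _ := by
        apply Finset.sum_congr rfl
        intro j hj
        push_cast
        ring
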